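/- Let a, b ∈ ℂ with a ≠ b. Define r_1(t',t) := a·e^{a(t'−t)}, r_2(t',t) := b·e^{b(t'−t)}, ρ := r_1 + r_2 + r_1 ⋆ r_2, and T̃ := K − ρ + ρ ⋆ K where K is the constant kernel K(t',t) := a + b. Then for all reals t ≤ t', T̃(t',t) = a·b·(e^{a(t'−t)} − e^{b(t'−t)})/(a − b). -/
import Mathlib


/-- Volterra convolution: `(F ⋆ G)(t',t) = ∫_t^{t'} F(t',τ)·G(τ,t) dτ`. -/
noncomputable def volterraConv (F G : ℝ → ℝ → ℂ) : ℝ → ℝ → ℂ :=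
  fun t' t => ∫ τ in t..t', F t' τ * G τ t

lemma L1 (c : ℂ) (t t' : ℝ) :
    ∫ τ in t..t', c * Complex.exp (c * (↑t' - ↑τ)) =
      Complex.exp (c * (↑t' - ↑t)) - 1 := by
  by_cases hc : c = 0
  · simp [hc]
  · have h : ∀ τ : ℝ, c * Complex.exp (c * (↑t' - ↑τ)) =
        (c * Complex.exp (c * t')) * Complex.exp ((-c) * τ) := by
      intro τ
      have e : c * (↑t' - ↑τ) = c * ↑t' + (-c) * ↑τ := by ring
      rw [e, Complex.exp_add]; ring
    simp only [h]
    rw [intervalIntegral.integral_const_mul,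
      integral_exp_mul_complex (neg_ne_zero.2 hc)]
    have e1 : Complex.exp (c*↑t') * Complex.exp (-c*↑t') = 1 := by
      rw [← Complex.exp_add]; ring_nf; exact Complex.exp_zero
    have e2 : Complex.exp (c*↑t') * Complex.exp (-c*↑t) = Complex.exp (c*(↑t'-↑t)) := by
      rw [← Complex.exp_add]; ring_nf
    rw [mul_comm (c * Complex.exp (c*↑t')), div_mul_eq_mul_div,
      div_eq_iff (neg_ne_zero.2 hc)]
    linear_combination c * e1 - c * e2

lemma L2 (a b : ℂ) (hab : a ≠ b) (t t' : ℝ) :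
    ∫ τ in t..t', (a * Complex.exp (a * (↑t' - ↑τ))) * (b * Complex.exp (b * (↑τ - ↑t))) =
      a * b * (Complex.exp (a * (↑t' - ↑t)) - Complex.exp (b * (↑t' - ↑t))) / (a - b) := by
  have hba : (b : ℂ) - a ≠ 0 := sub_ne_zero.2 (Ne.symm hab)
  have h : ∀ τ : ℝ, (a * Complex.exp (a * (↑t' - ↑τ))) * (b * Complex.exp (b * (↑τ - ↑t))) =
      (a * b * Complex.exp (a * t' - b * t)) * Complex.exp ((b - a) * τ) := by
    intro τ
    have e : a * (↑t' - ↑τ) + b * (↑τ - ↑t) = (a * ↑t' - b * ↑t) + (b - a) * ↑τ := by ring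
    calc (a * Complex.exp (a * (↑t' - ↑τ))) * (b * Complex.exp (b * (↑τ - ↑t)))
        = a * b * Complex.exp (a * (↑t' - ↑τ) + b * (↑τ - ↑t)) := by
          rw [Complex.exp_add]; ring
      _ = _ := by rw [e, Complex.exp_add]; ring
  simp only [h]
  rw [intervalIntegral.integral_const_mul, integral_exp_mul_complex hba]
  have e1 : Complex.exp (a*↑t' - b*↑t) * Complex.exp ((b-a)*↑t') = Complex.exp (b*(↑t'-↑t)) := by
    rw [← Complex.exp_add]; ring_nf
  have e2 : Complex.exp (a*↑t' - b*↑t) * Complex.exp ((b-a)*↑t) = Complex.exp (a*(↑t'-↑t)) := by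
    rw [← Complex.exp_add]; ring_nf
  rw [mul_div_assoc, mul_comm (a*b*Complex.exp (a*↑t' - b*↑t)), div_mul_eq_mul_div,
    mul_div_assoc', div_eq_div_iff hba (sub_ne_zero.2 hab)]
  linear_combination a*b*(a-b)*e1 - a*b*(a-b)*e2

/-- For the constant sum kernel `K = a + b` split as `K₁ ≡ a`, `K₂ ≡ b`
(`a ≠ b`), with resolvent kernels `r₁(t',t) = a·e^{a(t'−t)}`,
`r₂(t',t) = b·e^{b(t'−t)}`, `ρ = r₁ + r₂ + r₁ ⋆ r₂` and
`T̃ = K − ρ + ρ ⋆ K`, one has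
`T̃(t',t) = a·b·(e^{a(t'−t)} − e^{b(t'−t)})/(a − b)` for all `t ≤ t'`. -/
theorem stmt_17 (a b : ℂ) (hab : a ≠ b)
    (r₁ r₂ : ℝ → ℝ → ℂ)
    (hr1 : ∀ t' t : ℝ, r₁ t' t = a * Complex.exp (a * (↑t' - ↑t)))
    (hr2 : ∀ t' t : ℝ, r₂ t' t = b * Complex.exp (b * (↑t' - ↑t)))
    (K : ℝ → ℝ → ℂ) (hK : ∀ t' t : ℝ, K t' t = a + b)
    (ρ : ℝ → ℝ → ℂ)
    (hρ : ∀ t' t, ρ t' t = r₁ t' t + r₂ t' t + volterraConv r₁ r₂ t' t)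
    (Ttil : ℝ → ℝ → ℂ)
    (hTtil : ∀ t' t, Ttil t' t = K t' t - ρ t' t + volterraConv ρ K t' t) :
    ∀ t t' : ℝ, t ≤ t' →
      Ttil t' t =
        a * b * (Complex.exp (a * (↑t' - ↑t)) - Complex.exp (b * (↑t' - ↑t))) /
          (a - b) := by
  have hd : (a : ℂ) - b ≠ 0 := sub_ne_zero.2 hab
  have hconv : ∀ t' t : ℝ, volterraConv r₁ r₂ t' t =
      a * b * (Complex.exp (a * (↑t' - ↑t)) - Complex.exp (b * (↑t' - ↑t))) / (a - b) := by
    intro t' t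
    rw [← L2 a b hab t t']
    apply intervalIntegral.integral_congr
    intro τ _
    simp only [hr1, hr2]
  intro t t' _
  have hout : volterraConv ρ K t' t =
      ((a+b)*a/(a-b)) * (Complex.exp (a*(↑t'-↑t)) - 1)
      - ((a+b)*b/(a-b)) * (Complex.exp (b*(↑t'-↑t)) - 1) := by
    have hpt : ∀ τ ∈ Set.uIcc t t', ρ t' τ * K τ t =
        ((a+b)*a/(a-b)) * (a * Complex.exp (a * (↑t' - ↑τ)))
        - ((a+b)*b/(a-b)) * (b * Complex.exp (b * (↑t' - ↑τ))) := by
      intro τ _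
      rw [hρ, hr1, hr2, hK, hconv]
      field_simp
      ring
    have i1 : IntervalIntegrable
        (fun τ : ℝ => ((a+b)*a/(a-b)) * (a * Complex.exp (a * (↑t' - ↑τ))))
        MeasureTheory.volume t t' := by
      apply Continuous.intervalIntegrable; fun_prop
    have i2 : IntervalIntegrable
        (fun τ : ℝ => ((a+b)*b/(a-b)) * (b * Complex.exp (b * (↑t' - ↑τ))))
        MeasureTheory.volume t t' := by
      apply Continuous.intervalIntegrable; fun_prop
    rw [show volterraConv ρ K t' t = ∫ τ in t..t', ρ t' τ * K τ t from rfl,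
      intervalIntegral.integral_congr hpt,
      intervalIntegral.integral_sub i1 i2,
      intervalIntegral.integral_const_mul ((a+b)*a/(a-b)),
      intervalIntegral.integral_const_mul ((a+b)*b/(a-b)),
      L1 a, L1 b]
  rw [hTtil, hK, hρ, hr1, hr2, hconv, hout]
  field_simp
  ring
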